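/- arXiv:2104.01665 — 4 statements merged into one kernel-verified Lean document; each statement's English description precedes it below -/
import Mathlib

section
/- For every integer m ≥ 1 and every primitive (2m+1)-th root of unity ζ, we have ∏_{j=1}^{m} (x^2 + 2x - 1 + ζ^j + ζ̄^j) = T_{2m+1}(z)/z, where z = (x+1)/2 and T_n is the Chebyshev polynomial of the first kind. -/
open Polynomial Complex

private lemma cheb_eval_half_add_inv (W : ℂ) (hW : W ≠ 0) (n : ℕ) :
    (Polynomial.Chebyshev.T ℂ (n : ℤ)).eval ((W + W⁻¹) / 2) = (W ^ n + W⁻¹ ^ n) / 2 := by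
  induction n using Nat.twoStepInduction with
  | zero => simp [Polynomial.Chebyshev.T_zero]
  | one => simp only [Nat.cast_one, Polynomial.Chebyshev.T_one, eval_X, pow_one]
  | more n ih1 ih2 =>
    have hcast : ((n + 2 : ℕ) : ℤ) = (n : ℤ) + 2 := by push_cast; ring
    have hcast1 : ((n + 1 : ℕ) : ℤ) = (n : ℤ) + 1 := by push_cast; ring
    rw [hcast, Polynomial.Chebyshev.T_add_two]
    rw [hcast1] at ih2
    simp only [eval_sub, eval_mul, eval_ofNat, eval_X, ih1, ih2]
    have hWi : W * W⁻¹ = 1 := mul_inv_cancel₀ hW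
    linear_combination ((W⁻¹ ^ n + W ^ n) / 2) * hWi

private lemma prod_range_sub_pow {n : ℕ} (hn : 0 < n) {ζ : ℂ} (hζ : IsPrimitiveRoot ζ n)
    (y : ℂ) : ∏ i ∈ Finset.range n, (y - ζ ^ i) = y ^ n - 1 := by
  have : NeZero n := ⟨hn.ne'⟩
  have h := congrArg (Polynomial.eval y) (Polynomial.X_pow_sub_one_eq_prod hn hζ)
  simp only [eval_sub, eval_pow, eval_X, eval_one, eval_prod, eval_C] at h
  rw [h]
  refine Finset.prod_bij (fun i _ => ζ ^ i) ?_ ?_ ?_ ?_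
  · intro i _
    rw [Polynomial.mem_nthRootsFinset hn]
    rw [← pow_mul, mul_comm, pow_mul, hζ.pow_eq_one, one_pow]
  · intro i hi j hj hij
    exact hζ.pow_inj (Finset.mem_range.mp hi) (Finset.mem_range.mp hj) hij
  · intro μ hμ
    obtain ⟨i, hi, rfl⟩ := hζ.eq_pow_of_pow_eq_one ((Polynomial.mem_nthRootsFinset hn 1).mp hμ)
    exact ⟨i, Finset.mem_range.mpr hi, rfl⟩
  · intro i _; rfl

theorem prod_quadratics_eq_chebyshev_T (m : ℕ) (hm : 1 ≤ m) (ζ : ℂ)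
    (hζ : IsPrimitiveRoot ζ (2 * m + 1)) (x : ℂ) :
    ((x + 1) / 2) * ∏ j ∈ Finset.Icc 1 m,
        (x ^ 2 + 2 * x - 1 + ζ ^ j + (starRingEnd ℂ) (ζ ^ j)) =
      (Polynomial.Chebyshev.T ℂ (2 * m + 1)).eval ((x + 1) / 2) := by
  have hn0 : 2 * m + 1 ≠ 0 := by omega
  set z : ℂ := (x + 1) / 2 with hz
  obtain ⟨w, hw⟩ := IsAlgClosed.exists_pow_nat_eq (z ^ 2 - 1) (by norm_num : 0 < 2)
  set W : ℂ := z + w with hWdef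
  have hmul : W * (z - w) = 1 := by
    have h : W * (z - w) = z ^ 2 - w ^ 2 := by ring
    rw [h, hw]; ring
  have hW0 : W ≠ 0 := left_ne_zero_of_mul_eq_one hmul
  have hWinv : W⁻¹ = z - w := inv_eq_of_mul_eq_one_right hmul
  have hWi : W * W⁻¹ = 1 := mul_inv_cancel₀ hW0
  have hzW : z = (W + W⁻¹) / 2 := by rw [hWinv, hWdef]; ring
  have hx : x = 2 * z - 1 := by rw [hz]; ring
  -- conjugate
  have hnorm : ‖ζ‖ = 1 := norm_eq_one_of_pow_eq_one hζ.pow_eq_one hn0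
  have hcz : (starRingEnd ℂ) ζ = ζ⁻¹ := (Complex.inv_eq_conj hnorm).symm
  have hconj : ∀ j ∈ Finset.Icc 1 m, (starRingEnd ℂ) (ζ ^ j) = ζ ^ (2 * m + 1 - j) := by
    intro j hj
    obtain ⟨hj1, hj2⟩ := Finset.mem_Icc.mp hj
    have hmm : ζ ^ (2 * m + 1 - j) * ζ ^ j = 1 := by
      rw [← pow_add]
      have : 2 * m + 1 - j + j = 2 * m + 1 := by omega
      rw [this, hζ.pow_eq_one]
    rw [map_pow, hcz, inv_pow]
    exact (eq_inv_of_mul_eq_one_left hmm).symm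
  -- the factor identity
  have hfac : ∀ j ∈ Finset.Icc 1 m,
      W ^ 2 * (x ^ 2 + 2 * x - 1 + ζ ^ j + ζ ^ (2 * m + 1 - j)) =
        (W ^ 2 + ζ ^ j) * (W ^ 2 + ζ ^ (2 * m + 1 - j)) := by
    intro j hj
    obtain ⟨hj1, hj2⟩ := Finset.mem_Icc.mp hj
    have hab : ζ ^ j * ζ ^ (2 * m + 1 - j) = 1 := by
      rw [← pow_add]
      have : j + (2 * m + 1 - j) = 2 * m + 1 := by omega
      rw [this, hζ.pow_eq_one]
    have hx2 : x = W + W⁻¹ - 1 := by rw [hx, hzW]; ring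
    rw [hx2]
    linear_combination (2 * W ^ 2 + W * W⁻¹ + 1) * hWi - hab
  set Q : ℂ := ∏ j ∈ Finset.Icc 1 m, (x ^ 2 + 2 * x - 1 + ζ ^ j + (starRingEnd ℂ) (ζ ^ j))
    with hQ
  set P : ℂ := ∏ j ∈ Finset.Icc 1 m, (W ^ 2 + ζ ^ j) * (W ^ 2 + ζ ^ (2 * m + 1 - j)) with hP
  have hcard : (Finset.Icc 1 m).card = m := by simp
  have hQ' : Q = ∏ j ∈ Finset.Icc 1 m,
      (x ^ 2 + 2 * x - 1 + ζ ^ j + ζ ^ (2 * m + 1 - j)) :=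
    Finset.prod_congr rfl (fun j hj => by rw [hconj j hj])
  have hkey : W ^ (2 * m) * Q = P := by
    rw [hQ']
    calc W ^ (2 * m) * ∏ j ∈ Finset.Icc 1 m,
          (x ^ 2 + 2 * x - 1 + ζ ^ j + ζ ^ (2 * m + 1 - j))
        = ∏ j ∈ Finset.Icc 1 m,
            W ^ 2 * (x ^ 2 + 2 * x - 1 + ζ ^ j + ζ ^ (2 * m + 1 - j)) := by
          rw [Finset.prod_mul_distrib, Finset.prod_const, hcard, ← pow_mul]
      _ = P := Finset.prod_congr rfl hfac
  have hall : ∏ i ∈ Finset.range (2 * m + 1), (W ^ 2 + ζ ^ i) = W ^ (4 * m + 2) + 1 := by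
    have h2 := prod_range_sub_pow (Nat.pos_of_ne_zero hn0) hζ (-W ^ 2)
    calc ∏ i ∈ Finset.range (2 * m + 1), (W ^ 2 + ζ ^ i)
        = ∏ i ∈ Finset.range (2 * m + 1), (-1) * (-W ^ 2 - ζ ^ i) :=
          Finset.prod_congr rfl (fun i _ => by ring)
      _ = (-1) ^ (2 * m + 1) * ∏ i ∈ Finset.range (2 * m + 1), (-W ^ 2 - ζ ^ i) := by
          rw [Finset.prod_mul_distrib, Finset.prod_const, Finset.card_range]
      _ = (-1) ^ (2 * m + 1) * ((-W ^ 2) ^ (2 * m + 1) - 1) := by rw [h2]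
      _ = W ^ (4 * m + 2) + 1 := by
          have hodd : Odd (2 * m + 1) := ⟨m, by ring⟩
          rw [hodd.neg_one_pow, hodd.neg_pow, ← pow_mul]
          have h6 : 2 * (2 * m + 1) = 4 * m + 2 := by ring
          rw [h6]; ring
  have hsplit : ∏ i ∈ Finset.range (2 * m + 1), (W ^ 2 + ζ ^ i) = (W ^ 2 + 1) * P := by
    have h0 : ∏ i ∈ Finset.range (2 * m + 1), (W ^ 2 + ζ ^ i)
        = (∏ i ∈ Finset.range (2 * m), (W ^ 2 + ζ ^ (i + 1))) * (W ^ 2 + ζ ^ 0) :=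
      Finset.prod_range_succ' _ _
    have h4 : ∏ i ∈ Finset.range (2 * m), (W ^ 2 + ζ ^ (i + 1))
        = (∏ i ∈ Finset.range m, (W ^ 2 + ζ ^ (i + 1))) *
          ∏ i ∈ Finset.range m, (W ^ 2 + ζ ^ (m + i + 1)) := by
      rw [two_mul, Finset.prod_range_add]
    have h5 : ∏ i ∈ Finset.range m, (W ^ 2 + ζ ^ (m + i + 1))
        = ∏ j ∈ Finset.range m, (W ^ 2 + ζ ^ (2 * m + 1 - (j + 1))) := by
      rw [← Finset.prod_range_reflect]
      refine Finset.prod_congr rfl (fun i hi => ?_)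
      have hi' : i < m := Finset.mem_range.mp hi
      have : m + (m - 1 - i) + 1 = 2 * m + 1 - (i + 1) := by omega
      rw [this]
    have hPr : P = ∏ i ∈ Finset.range m,
        (W ^ 2 + ζ ^ (i + 1)) * (W ^ 2 + ζ ^ (2 * m + 1 - (i + 1))) := by
      rw [hP]
      refine (Finset.prod_bij (fun i _ => i + 1) ?_ ?_ ?_ ?_).symm
      · intro i hi
        simp only [Finset.mem_range] at hi
        simp only [Finset.mem_Icc]
        omega
      · intro a ha b hb h
        simp only [Finset.mem_range] at ha hb
        omega
      · intro j hj
        simp only [Finset.mem_Icc] at hj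
        refine ⟨j - 1, Finset.mem_range.mpr (by omega), by omega⟩
      · intro i _; rfl
    rw [h0, h4, h5, hPr, Finset.prod_mul_distrib, pow_zero]
    ring
  have hpair : P * (W ^ 2 + 1) = W ^ (4 * m + 2) + 1 := by
    rw [mul_comm, ← hsplit, hall]
  have hWpow : W ^ (2 * m + 1) * W⁻¹ ^ (2 * m + 1) = 1 := by
    rw [← mul_pow, hWi, one_pow]
  have hcastT : (2 * (m : ℤ) + 1) = ((2 * m + 1 : ℕ) : ℤ) := by push_cast; ring
  rw [hzW, hcastT, cheb_eval_half_add_inv W hW0]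
  apply mul_left_cancel₀ (mul_ne_zero (two_ne_zero) (pow_ne_zero (2 * m + 1) hW0))
  linear_combination (W ^ (2 * m) * Q) * hWi + (W ^ 2 + 1) * hkey + hpair - hWpow
end

section
/- For every integer m ≥ 1 and every primitive (2m+1)-th root of unity ζ, we have ∑_{j=1}^{m} (2x + ζ^j + ζ̄^j)/(x^2 + 2x - 1 + ζ^j + ζ̄^j) = -1/(2z) + (2m+1)(T_{2m+1}(z) - (z-1)U_{2m}(z))/(2 T_{2m+1}(z)), where z = (x+1)/2. -/
open Polynomial Complex Finset

lemma T_eval_key (y w : ℂ) (h : 2 * y * w = w ^ 2 + 1) : ∀ (k : ℕ),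
    (Chebyshev.T ℂ (k : ℤ)).eval y * (2 * w ^ k) = w ^ (2 * k) + 1 := by
  intro k
  induction k using Nat.twoStepInduction with
  | zero => simp [Chebyshev.T_zero]; ring
  | one => simp [Chebyshev.T_one]; linear_combination h
  | more k ih1 ih2 =>
    have hc : ((k + 2 : ℕ) : ℤ) = (k : ℤ) + 2 := by push_cast; ring
    rw [hc, Chebyshev.T_add_two]
    have hc1 : ((k + 1 : ℕ) : ℤ) = (k : ℤ) + 1 := by push_cast; ring
    rw [hc1] at ih2
    simp only [eval_sub, eval_mul, eval_ofNat, eval_X]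
    linear_combination (w^2 + 1) * ih2 - w^2 * ih1 +
      (2 * w ^ (k+1) * (Chebyshev.T ℂ ((k:ℤ)+1)).eval y) * h

lemma exists_w (y : ℂ) : ∃ w : ℂ, w ≠ 0 ∧ 2 * y * w = w ^ 2 + 1 := by
  obtain ⟨d, hd⟩ : ∃ d : ℂ, d ^ 2 = y ^ 2 - 1 :=
    ⟨(y ^ 2 - 1) ^ (((2:ℕ) : ℂ))⁻¹, by
      have := Complex.cpow_nat_inv_pow (y ^ 2 - 1) (two_ne_zero)
      simpa using this⟩
  refine ⟨y + d, ?_, by linear_combination -hd⟩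
  intro h0
  have h1 : d = -y := by linear_combination h0
  rw [h1] at hd
  have : (0:ℂ) = -1 := by linear_combination hd
  norm_num at this

lemma sq_s (m : ℕ) (ζ : ℂ) (hζ : IsPrimitiveRoot ζ (2*m+1)) (j : ℕ) :
    4 * (-I * (ζ^(j*(m+1)) - (ζ^(j*(m+1)))⁻¹) / 2)^2 = 2 - ζ^j - (ζ^j)⁻¹ := by
  have hζ0 : ζ ≠ 0 := hζ.ne_zero (by omega)
  set τ := ζ^(j*(m+1)) with hτ
  have hτ0 : τ ≠ 0 := pow_ne_zero _ hζ0
  have hτ2 : τ^2 = ζ^j := by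
    rw [hτ, ← pow_mul]
    have : j*(m+1)*2 = (2*m+1)*j + j := by ring
    rw [this, pow_add, pow_mul, hζ.pow_eq_one, one_pow, one_mul]
  have hττ : τ * τ⁻¹ = 1 := mul_inv_cancel₀ hτ0
  rw [← hτ2, ← inv_pow]
  linear_combination (τ - τ⁻¹)^2 * Complex.I_sq + 2 * hττ

lemma prod_roots (m : ℕ) (ζ : ℂ) (hζ : IsPrimitiveRoot ζ (2*m+1)) (v : ℂ) :
    ∏ j ∈ range (2*m+1), (v - ζ^j) = v^(2*m+1) - 1 := by
  have hn : 0 < 2*m+1 := by omega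
  have himg : nthRootsFinset (2*m+1) (1 : ℂ) = (range (2*m+1)).image (ζ ^ ·) := by
    ext μ
    simp only [Polynomial.mem_nthRootsFinset hn, Finset.mem_image, Finset.mem_range]
    constructor
    · intro h
      obtain ⟨i, hi, hie⟩ := hζ.eq_pow_of_pow_eq_one h
      exact ⟨i, hi, hie⟩
    · rintro ⟨i, _, rfl⟩
      rw [← pow_mul, mul_comm, pow_mul, hζ.pow_eq_one, one_pow]
  have h1 := Polynomial.X_pow_sub_one_eq_prod hn hζ
  have h2 := congrArg (Polynomial.eval v) h1
  simp only [eval_sub, eval_pow, eval_X, eval_one, eval_prod, eval_C] at h2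
  rw [himg, Finset.prod_image (fun a ha b hb hab =>
    hζ.pow_inj (Finset.mem_range.1 ha) (Finset.mem_range.1 hb) hab)] at h2
  exact h2.symm

lemma T_factor (m : ℕ) (ζ : ℂ) (hζ : IsPrimitiveRoot ζ (2*m+1)) (s : ℕ → ℂ)
    (hs : ∀ j, 4 * (s j)^2 = 2 - ζ^j - (ζ^j)⁻¹) :
    Chebyshev.T ℂ ((2*m+1 : ℕ) : ℤ) =
      C ((4:ℂ)^m) * (X * ∏ j ∈ Icc 1 m, (X^2 - C ((s j)^2))) := by
  have hζ0 : ζ ≠ 0 := hζ.ne_zero (by omega)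
  apply Polynomial.funext
  intro y
  obtain ⟨w, hw0, hw⟩ := exists_w y
  -- product over all roots
  have hall : ∏ j ∈ range (2*m+1), (w^2 + ζ^j) = (w^2)^(2*m+1) + 1 := by
    have h := prod_roots m ζ hζ (-(w^2))
    have h2 : ∏ j ∈ range (2*m+1), (-(w^2) - ζ^j)
        = (-1:ℂ)^(2*m+1) * ∏ j ∈ range (2*m+1), (w^2 + ζ^j) := by
      have hc : ∀ j ∈ range (2*m+1), -(w^2) - ζ^j = (-1) * (w^2 + ζ^j) :=
        fun j _ => by ring
      rw [Finset.prod_congr rfl hc, Finset.prod_mul_distrib, Finset.prod_const,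
        Finset.card_range]
    rw [h2] at h
    have ho : Odd (2*m+1) := ⟨m, by ring⟩
    rw [ho.neg_one_pow, ho.neg_pow] at h
    linear_combination -h
  -- split off j = 0
  have hsplit : range (2*m+1) = insert 0 (Icc 1 (2*m)) := by
    ext a; simp only [Finset.mem_range, Finset.mem_insert, Finset.mem_Icc]; omega
  rw [hsplit, Finset.prod_insert (by simp), pow_zero] at hall
  -- pair up
  have hpair : Icc 1 (2*m) = Icc 1 m ∪ Icc (m+1) (2*m) := by
    ext a; simp only [Finset.mem_Icc, Finset.mem_union]; omega
  have hdisj : Disjoint (Icc 1 m) (Icc (m+1) (2*m)) := by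
    rw [Finset.disjoint_left]; intro a ha hb
    simp only [Finset.mem_Icc] at ha hb; omega
  rw [hpair, Finset.prod_union hdisj] at hall
  have hrefl : ∏ j ∈ Icc (m+1) (2*m), (w^2 + ζ^j)
      = ∏ j ∈ Icc 1 m, (w^2 + ζ^(2*m+1-j)) := by
    apply Finset.prod_nbij' (fun j => 2*m+1-j) (fun j => 2*m+1-j)
    · intro a ha; simp only [Finset.mem_Icc] at *; omega
    · intro a ha; simp only [Finset.mem_Icc] at *; omega
    · intro a ha; simp only [Finset.mem_Icc] at ha; omega
    · intro a ha; simp only [Finset.mem_Icc] at ha; omega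
    · intro a ha; simp only [Finset.mem_Icc] at ha
      congr 2; omega
  rw [hrefl, ← Finset.prod_mul_distrib] at hall
  -- per-term rewrite
  have hterm : ∀ j ∈ Icc 1 m,
      (w^2 + ζ^j) * (w^2 + ζ^(2*m+1-j)) = w^2 * (4*(y^2 - (s j)^2)) := by
    intro j hj
    simp only [Finset.mem_Icc] at hj
    have h2 : ζ^j * ζ^(2*m+1-j) = 1 := by
      rw [← pow_add, show j + (2*m+1-j) = 2*m+1 by omega, hζ.pow_eq_one]
    have h1 : (ζ^j)⁻¹ = ζ^(2*m+1-j) := inv_eq_of_mul_eq_one_right h2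
    have hs' : (4:ℂ)*(y^2 - (s j)^2) = 4*y^2 - (2 - ζ^j - (ζ^j)⁻¹) := by
      linear_combination -(hs j)
    rw [hs', h1]
    linear_combination (-(2*y*w + w^2 + 1)) * hw + h2
  rw [Finset.prod_congr rfl hterm, Finset.prod_mul_distrib, Finset.prod_const,
    Nat.card_Icc, Nat.add_sub_cancel] at hall
  -- finish
  have hkey := T_eval_key y w hw (2*m+1)
  have hwn : (2:ℂ) * w^(2*m+1) ≠ 0 := by simp [hw0]
  apply mul_right_cancel₀ hwn
  rw [hkey]
  simp only [eval_mul, eval_C, eval_X, eval_prod, eval_sub, eval_pow]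
  rw [Finset.prod_mul_distrib, Finset.prod_const, Nat.card_Icc, Nat.add_sub_cancel] at hall
  rw [show w ^ (2*(2*m+1)) = (w^2)^(2*m+1) by rw [← pow_mul]]
  rw [← hall]
  linear_combination (-((w^2)^m * 4^m * ∏ j ∈ Icc 1 m, (y^2 - (s j)^2))) * hw

lemma eval_deriv_prod (s : Finset ℕ) (f : ℕ → ℂ[X]) (z : ℂ)
    (hf : ∀ j ∈ s, (f j).eval z ≠ 0) :
    (derivative (∏ j ∈ s, f j)).eval z =
      (∏ j ∈ s, (f j).eval z) * ∑ j ∈ s, (derivative (f j)).eval z / (f j).eval z := by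
  classical
  induction s using Finset.induction_on with
  | empty => simp
  | insert _ _ ha ih =>
    rename_i a s
    have hfa : (f a).eval z ≠ 0 := hf a (Finset.mem_insert_self a s)
    have hfs : ∀ j ∈ s, (f j).eval z ≠ 0 := fun j hj => hf j (Finset.mem_insert_of_mem hj)
    rw [Finset.prod_insert ha, Finset.sum_insert ha, Finset.prod_insert ha,
      derivative_mul, eval_add, eval_mul, eval_mul, ih hfs]
    simp only [eval_prod, div_eq_mul_inv]
    field_simp

theorem sum_rational_eq_chebyshev (m : ℕ) (hm : 1 ≤ m) (ζ : ℂ)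
    (hζ : IsPrimitiveRoot ζ (2 * m + 1)) (x : ℂ)
    (hden : ∀ j ∈ Finset.Icc 1 m,
      x ^ 2 + 2 * x - 1 + ζ ^ j + (starRingEnd ℂ) (ζ ^ j) ≠ 0)
    (hz : (x + 1) / 2 ≠ 0)
    (hT : (Polynomial.Chebyshev.T ℂ (2 * m + 1)).eval ((x + 1) / 2) ≠ 0) :
    ∑ j ∈ Finset.Icc 1 m,
        (2 * x + ζ ^ j + (starRingEnd ℂ) (ζ ^ j)) /
          (x ^ 2 + 2 * x - 1 + ζ ^ j + (starRingEnd ℂ) (ζ ^ j)) =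
      -(1 / (2 * ((x + 1) / 2))) +
        ((2 * m + 1) : ℂ) *
            ((Polynomial.Chebyshev.T ℂ (2 * m + 1)).eval ((x + 1) / 2) -
              (((x + 1) / 2) - 1) *
                (Polynomial.Chebyshev.U ℂ (2 * m)).eval ((x + 1) / 2)) /
          (2 * (Polynomial.Chebyshev.T ℂ (2 * m + 1)).eval ((x + 1) / 2)) := by
  have hζ0 : ζ ≠ 0 := hζ.ne_zero (by omega)
  set z : ℂ := (x + 1) / 2 with hzdef
  -- conj = inv
  have hnorm : ∀ j : ℕ, (starRingEnd ℂ) (ζ^j) = (ζ^j)⁻¹ := by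
    intro j
    have h1 : ‖ζ‖ = 1 := by
      have := hζ.norm'_eq_one (by omega)
      exact this
    have hab : ‖ζ^j‖ = 1 := by rw [norm_pow, h1, one_pow]
    exact (Complex.inv_eq_conj hab).symm
  set sf : ℕ → ℂ := fun j => -I * (ζ^(j*(m+1)) - (ζ^(j*(m+1)))⁻¹) / 2 with hsf
  have hs : ∀ j, 4*(sf j)^2 = 2 - ζ^j - (ζ^j)⁻¹ := sq_s m ζ hζ
  have hDval : ∀ j ∈ Finset.Icc 1 m,
      x^2+2*x-1+ζ^j+(starRingEnd ℂ) (ζ^j) = 4*(z^2 - (sf j)^2) := by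
    intro j hj
    rw [hnorm j, hzdef]
    linear_combination (hs j)
  have hgne : ∀ j ∈ Finset.Icc 1 m, z^2 - (sf j)^2 ≠ 0 := by
    intro j hj h0
    exact hden j hj (by rw [hDval j hj, h0, mul_zero])
  -- the factorization and derivative
  have hcast : ((2*m+1 : ℕ) : ℤ) = 2*(m:ℤ)+1 := by push_cast; ring
  have hfac := T_factor m ζ hζ sf hs
  rw [hcast] at hfac
  set Qz : ℂ := ∏ j ∈ Finset.Icc 1 m, (z^2 - (sf j)^2) with hQz
  have hE2 : (Chebyshev.T ℂ (2*(m:ℤ)+1)).eval z = (4:ℂ)^m * (z * Qz) := by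
    rw [hfac]
    simp [eval_prod, hQz]
  have hQne : Qz ≠ 0 := Finset.prod_ne_zero_iff.mpr hgne
  -- derivative eval
  have hder := congrArg (fun p => (derivative p).eval z) hfac
  simp only [derivative_C_mul, derivative_mul, derivative_X, one_mul, eval_mul, eval_add,
    eval_C, eval_X] at hder
  rw [Chebyshev.T_derivative_eq_U] at hder
  have hidx : (2*(m:ℤ)+1-1) = 2*(m:ℤ) := by ring
  rw [hidx] at hder
  rw [eval_deriv_prod _ _ _ (by
      intro j hj
      simpa using hgne j hj)] at hder
  simp only [derivative_C, eval_zero, zero_mul, zero_add, eval_prod, eval_sub, eval_pow,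
    eval_X, eval_C, derivative_sub, derivative_X_pow, eval_mul, eval_intCast, sub_zero] at hder
  have hconv : ∑ x ∈ Finset.Icc 1 m, ((2:ℕ):ℂ) * z ^ (2-1) / (z ^ 2 - sf x ^ 2)
      = 2 * z * ∑ j ∈ Finset.Icc 1 m, (z ^ 2 - sf j ^ 2)⁻¹ := by
    rw [Finset.mul_sum]
    refine Finset.sum_congr rfl fun j hj => ?_
    rw [div_eq_mul_inv]
    push_cast
    ring
  rw [hconv, ← hQz] at hder
  push_cast at hder
  set Sg : ℂ := ∑ j ∈ Finset.Icc 1 m, (z ^ 2 - sf j ^ 2)⁻¹ with hSg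
  set Tz : ℂ := Polynomial.eval z (Polynomial.Chebyshev.T ℂ (2 * (m:ℤ) + 1)) with hTz
  set Uz : ℂ := Polynomial.eval z (Polynomial.Chebyshev.U ℂ (2 * (m:ℤ))) with hUz
  have hK : z * ((2*(m:ℂ)+1) * Uz) = Tz + 2*z^2*(Tz*Sg) := by
    linear_combination z*hder - (1+2*z^2*Sg)*hE2
  -- transform the sum on the LHS of the goal
  have hterm2 : ∀ j ∈ Finset.Icc 1 m,
      (2*x+ζ^j+(starRingEnd ℂ) (ζ^j)) / (x^2+2*x-1+ζ^j+(starRingEnd ℂ) (ζ^j))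
        = 1 + (z*(1-z)) * (z^2 - sf j^2)⁻¹ := by
    intro j hj
    have hnum : 2*x + ζ^j + (starRingEnd ℂ) (ζ^j) = 4*(z - sf j^2) := by
      rw [hnorm j, hzdef]
      linear_combination hs j
    rw [hDval j hj, hnum]
    field_simp [hgne j hj]
    ring
  rw [Finset.sum_congr rfl hterm2, Finset.sum_add_distrib, Finset.sum_const, Nat.card_Icc,
    Nat.add_sub_cancel, ← Finset.mul_sum, ← hSg]
  simp only [nsmul_eq_mul, mul_one]
  have hgoal' : ((m:ℂ) + z*(1-z)*Sg) * (2*z*Tz) = -Tz + (2*(m:ℂ)+1)*z*(Tz-(z-1)*Uz) := by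
    linear_combination (z-1)*hK
  have h2z : (2:ℂ)*z ≠ 0 := by simp [hz]
  field_simp
  linear_combination hgoal'
end

section
/- Let m ≥ 1 and 1 ≤ t ≤ 2m+1, set ζ = e^{2πit/(2m+1)}, g = gcd(2m+1, t), and n = (2m+1)/g. Then ∏_{j=1}^{m} (x^2 + 2x - 1 + ζ^j + ζ̄^j) = (2 T_n(z))^g / (2z), where z = (x+1)/2. -/
open Polynomial Complex

private lemma prod_sub_primroot {n : ℕ} (hn : 0 < n) {μ : ℂ} (hμ : IsPrimitiveRoot μ n)
    (c : ℂ) : ∏ r ∈ Finset.range n, (c - μ ^ r) = c ^ n - 1 := by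
  have himg : Polynomial.nthRootsFinset n (1 : ℂ) = (Finset.range n).image (μ ^ ·) := by
    ext z
    simp only [Polynomial.mem_nthRootsFinset hn, Finset.mem_image, Finset.mem_range]
    constructor
    · intro hz
      have : NeZero n := ⟨hn.ne'⟩
      obtain ⟨i, hi, rfl⟩ := hμ.eq_pow_of_pow_eq_one hz
      exact ⟨i, hi, rfl⟩
    · rintro ⟨i, hi, rfl⟩
      rw [← pow_mul, mul_comm, pow_mul, hμ.pow_eq_one, one_pow]
  have h1 := Polynomial.X_pow_sub_one_eq_prod hn hμ
  have h2 := congrArg (Polynomial.eval c) h1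
  simp only [eval_sub, eval_pow, eval_X, eval_one, eval_prod, eval_C] at h2
  rw [h2, himg, Finset.prod_image]
  intro i hi j hj hij
  exact hμ.pow_inj (Finset.mem_range.mp hi) (Finset.mem_range.mp hj) hij

private lemma prod_add_primroot {n : ℕ} (hn : Odd n) {μ : ℂ} (hμ : IsPrimitiveRoot μ n)
    (c : ℂ) : ∏ r ∈ Finset.range n, (c + μ ^ r) = c ^ n + 1 := by
  have h := prod_sub_primroot hn.pos hμ (-c)
  have h2 : ∏ r ∈ Finset.range n, (-c - μ ^ r)
      = (-1) ^ n * ∏ r ∈ Finset.range n, (c + μ ^ r) := by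
    calc ∏ r ∈ Finset.range n, (-c - μ ^ r)
        = ∏ r ∈ Finset.range n, ((-1) * (c + μ ^ r)) :=
          Finset.prod_congr rfl fun r _ => by ring
      _ = (-1) ^ n * ∏ r ∈ Finset.range n, (c + μ ^ r) := by
          rw [Finset.prod_mul_distrib, Finset.prod_const, Finset.card_range]
  rw [h2, hn.neg_one_pow, hn.neg_pow] at h
  linear_combination -h

private lemma prod_add_primroot_mul {n : ℕ} (hn : Odd n) {μ : ℂ} (hμ : IsPrimitiveRoot μ n)
    (g : ℕ) (c : ℂ) :
    ∏ j ∈ Finset.range (g * n), (c + μ ^ j) = (c ^ n + 1) ^ g := by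
  induction g with
  | zero => simp
  | succ k ih =>
    have hkn : (k + 1) * n = k * n + n := by ring
    rw [hkn, Finset.prod_range_add, ih]
    have h2 : ∀ i ∈ Finset.range n, c + μ ^ (k * n + i) = c + μ ^ i := by
      intro i _
      rw [pow_add, mul_comm k n, pow_mul, hμ.pow_eq_one, one_pow, one_mul]
    rw [Finset.prod_congr rfl h2, prod_add_primroot hn hμ, pow_succ]

theorem prod_quadratics_eq_chebyshev_T_pow (m t : ℕ) (hm : 1 ≤ m)
    (ht : 1 ≤ t) (ht' : t ≤ 2 * m + 1) (x : ℂ) :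
    2 * ((x + 1) / 2) *
        ∏ j ∈ Finset.Icc 1 m,
          (x ^ 2 + 2 * x - 1 +
            (Complex.exp (2 * Real.pi * Complex.I * t / (2 * m + 1))) ^ j +
            (starRingEnd ℂ)
              ((Complex.exp (2 * Real.pi * Complex.I * t / (2 * m + 1))) ^ j)) =
      (2 * (Polynomial.Chebyshev.T ℂ ((2 * m + 1) / Nat.gcd (2 * m + 1) t)).eval
          ((x + 1) / 2)) ^ (Nat.gcd (2 * m + 1) t) := by
  set N : ℕ := 2 * m + 1 with hNdef
  set g : ℕ := Nat.gcd N t with hgdef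
  set n : ℕ := N / g with hndef
  have hgpos : 0 < g := Nat.gcd_pos_of_pos_left t (by omega)
  have hng : n * g = N := Nat.div_mul_cancel (Nat.gcd_dvd_left N t)
  have hNodd : Odd N := ⟨m, by omega⟩
  have hnodd : Odd n := (Nat.odd_mul.mp (hng ▸ hNodd)).1
  have hnpos : 0 < n := hnodd.pos
  set ζ : ℂ := Complex.exp (2 * Real.pi * Complex.I * t / (2 * m + 1)) with hζdef
  have hNC : ((N : ℕ) : ℂ) = 2 * (m : ℂ) + 1 := by exact_mod_cast hNdef
  have hNC0 : (2 * (m : ℂ) + 1) ≠ 0 := by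
    rw [← hNC]; exact_mod_cast (by omega : N ≠ 0)
  have hζ0 : ζ ≠ 0 := Complex.exp_ne_zero _
  have hζN : ζ ^ N = 1 := by
    rw [hζdef, ← Complex.exp_nat_mul]
    have : (N : ℂ) * (2 * Real.pi * Complex.I * t / (2 * m + 1)) = t * (2 * Real.pi * I) := by
      rw [hNC]; field_simp
    rw [this, Complex.exp_nat_mul_two_pi_mul_I]
  have hprim : IsPrimitiveRoot ζ n := by
    have hcop : (t / g).Coprime n := (Nat.coprime_div_gcd_div_gcd hgpos).symm
    have h := Complex.isPrimitiveRoot_exp_of_coprime (t / g) n hnpos.ne' hcop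
    have harg : 2 * (Real.pi : ℂ) * I * (↑(t / g) / ↑n) = 2 * Real.pi * Complex.I * t / (2 * m + 1) := by
      have e1 : ((t / g : ℕ) : ℂ) * g = t := by
        exact_mod_cast Nat.div_mul_cancel (Nat.gcd_dvd_right N t)
      have e2 : ((n : ℕ) : ℂ) * g = 2 * (m : ℂ) + 1 := by
        rw [← hNC]; exact_mod_cast hng
      have hn0 : ((n : ℕ) : ℂ) ≠ 0 := by exact_mod_cast hnpos.ne'
      have hg0 : (g : ℂ) ≠ 0 := by exact_mod_cast hgpos.ne'
      rw [← e2, ← e1]; field_simp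
    rwa [harg] at h
  -- conjugation fact
  have hconj1 : (starRingEnd ℂ) ζ * ζ = 1 := by
    rw [hζdef, ← Complex.exp_conj, ← Complex.exp_add]
    have : (starRingEnd ℂ) (2 * Real.pi * Complex.I * t / (2 * m + 1)) +
        2 * Real.pi * Complex.I * t / (2 * m + 1) = 0 := by
      simp only [map_div₀, map_mul, map_ofNat, Complex.conj_ofReal, Complex.conj_I,
        map_natCast, map_add, map_one]
      ring
    rw [this, Complex.exp_zero]
  have hkey : ∀ j ∈ Finset.Icc 1 m, (starRingEnd ℂ) (ζ ^ j) = ζ ^ (N - j) := by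
    intro j hj
    rw [Finset.mem_Icc] at hj
    have hjN : j ≤ N := by omega
    apply mul_right_cancel₀ (pow_ne_zero j hζ0)
    calc (starRingEnd ℂ) (ζ ^ j) * ζ ^ j = ((starRingEnd ℂ) ζ * ζ) ^ j := by
          rw [map_pow, ← mul_pow]
      _ = 1 := by rw [hconj1, one_pow]
      _ = ζ ^ (N - j) * ζ ^ j := by rw [← pow_add, Nat.sub_add_cancel hjN, hζN]
  -- pick w, v
  obtain ⟨θ, hθ⟩ := Complex.cos_surjective ((x + 1) / 2)
  set w : ℂ := Complex.exp (θ * I) with hwdef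
  set v : ℂ := Complex.exp (-(θ * I)) with hvdef
  have hw0 : w ≠ 0 := Complex.exp_ne_zero _
  have hwv : w * v = 1 := by rw [hwdef, hvdef, ← Complex.exp_add, add_neg_cancel, Complex.exp_zero]
  have hx1 : x + 1 = w + v := by
    have hc : Complex.cos θ = (Complex.exp (θ * I) + Complex.exp (-(θ * I))) / 2 := by
      rw [Complex.cos]
      ring_nf
    rw [hc, ← hwdef, ← hvdef] at hθ
    linear_combination -2 * hθ
  -- Chebyshev evaluation
  have hidx : (2 * (m : ℤ) + 1) / (g : ℤ) = (n : ℤ) := by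
    have h1 : ((N : ℕ) : ℤ) = 2 * (m : ℤ) + 1 := by rw [hNdef]; push_cast; ring
    calc (2 * (m : ℤ) + 1) / (g : ℤ) = ((N : ℕ) : ℤ) / (g : ℤ) := by rw [h1]
      _ = ((N / g : ℕ) : ℤ) := (Int.natCast_ediv N g).symm
      _ = (n : ℤ) := by rw [← hndef]
  have hcheb : 2 * (Polynomial.Chebyshev.T ℂ ((2 * (m : ℤ) + 1) / (g : ℤ))).eval ((x + 1) / 2)
      = w ^ n + v ^ n := by
    rw [hidx, ← hθ, Polynomial.Chebyshev.T_complex_cos]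
    have hcast : ((n : ℤ) : ℂ) * θ = (n : ℂ) * θ := by push_cast; ring
    have e1 : (n : ℂ) * θ * I = (n : ℂ) * (θ * I) := by ring
    have e2 : -((n : ℂ) * θ) * I = (n : ℂ) * (-(θ * I)) := by ring
    rw [hcast, Complex.cos, e1, e2, Complex.exp_nat_mul, Complex.exp_nat_mul,
      ← hwdef, ← hvdef]
    ring
  -- product over full range
  have hfull : ∏ j ∈ Finset.range N, (w ^ 2 + ζ ^ j) = ((w ^ 2) ^ n + 1) ^ g := by
    rw [← hng, mul_comm n g]
    exact prod_add_primroot_mul hnodd hprim g (w ^ 2)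
  -- factor identity
  have hfac : ∀ j ∈ Finset.Icc 1 m,
      w ^ 2 * (x ^ 2 + 2 * x - 1 + ζ ^ j + (starRingEnd ℂ) (ζ ^ j))
        = (w ^ 2 + ζ ^ j) * (w ^ 2 + ζ ^ (N - j)) := by
    intro j hj
    rw [hkey j hj]
    have hAB : ζ ^ j * ζ ^ (N - j) = 1 := by
      rw [← pow_add]
      have : j + (N - j) = N := by
        rw [Finset.mem_Icc] at hj; omega
      rw [this, hζN]
    linear_combination (w ^ 2 * (x + 1 + w + v)) * hx1 + (2 * w ^ 2 + w * v + 1) * hwv - hAB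
  -- combine over Icc 1 m
  have hP : w ^ (2 * m) * ∏ j ∈ Finset.Icc 1 m,
        (x ^ 2 + 2 * x - 1 + ζ ^ j + (starRingEnd ℂ) (ζ ^ j))
      = (∏ j ∈ Finset.Icc 1 m, (w ^ 2 + ζ ^ j)) *
        ∏ j ∈ Finset.Icc 1 m, (w ^ 2 + ζ ^ (N - j)) := by
    have hcard : (Finset.Icc 1 m).card = m := by rw [Nat.card_Icc]; omega
    calc w ^ (2 * m) * ∏ j ∈ Finset.Icc 1 m,
          (x ^ 2 + 2 * x - 1 + ζ ^ j + (starRingEnd ℂ) (ζ ^ j))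
        = ∏ j ∈ Finset.Icc 1 m,
            (w ^ 2 * (x ^ 2 + 2 * x - 1 + ζ ^ j + (starRingEnd ℂ) (ζ ^ j))) := by
          rw [Finset.prod_mul_distrib, Finset.prod_const, hcard, ← pow_mul]
      _ = ∏ j ∈ Finset.Icc 1 m, ((w ^ 2 + ζ ^ j) * (w ^ 2 + ζ ^ (N - j))) :=
          Finset.prod_congr rfl hfac
      _ = _ := Finset.prod_mul_distrib
  -- reindex the second product
  have hre : ∏ j ∈ Finset.Icc 1 m, (w ^ 2 + ζ ^ (N - j))
      = ∏ j ∈ Finset.Ioc m (2 * m), (w ^ 2 + ζ ^ j) := by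
    apply Finset.prod_nbij' (fun j => N - j) (fun j => N - j)
    · intro a ha; rw [Finset.mem_Icc] at ha; rw [Finset.mem_Ioc]; omega
    · intro a ha; rw [Finset.mem_Ioc] at ha; rw [Finset.mem_Icc]; omega
    · intro a ha; rw [Finset.mem_Icc] at ha; omega
    · intro a ha; rw [Finset.mem_Ioc] at ha; omega
    · intro a ha; rfl
  -- splitting range N
  have hsplit : ∏ j ∈ Finset.range N, (w ^ 2 + ζ ^ j)
      = (w ^ 2 + 1) * ((∏ j ∈ Finset.Icc 1 m, (w ^ 2 + ζ ^ j)) *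
          ∏ j ∈ Finset.Ioc m (2 * m), (w ^ 2 + ζ ^ j)) := by
    have h0m : Finset.Icc 1 m = Finset.Ioc 0 m := by
      rw [← Finset.Icc_add_one_left_eq_Ioc, zero_add]
    rw [h0m, Finset.prod_Ioc_consecutive _ (Nat.zero_le m) (by omega : m ≤ 2 * m)]
    rw [Finset.range_eq_Ico, Finset.prod_eq_prod_Ico_succ_bot (by omega : 0 < N)]
    have hIco : Finset.Ico 1 N = Finset.Ioc 0 (2 * m) := by
      ext a
      simp only [Finset.mem_Ico, Finset.mem_Ioc, hNdef]
      omega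
    rw [hIco, pow_zero]
  -- assemble
  have hw0' : w ^ (2 * m + 1) ≠ 0 := pow_ne_zero _ hw0
  apply mul_left_cancel₀ hw0'
  have hLHS : w ^ (2 * m + 1) * (2 * ((x + 1) / 2) *
        ∏ j ∈ Finset.Icc 1 m, (x ^ 2 + 2 * x - 1 + ζ ^ j + (starRingEnd ℂ) (ζ ^ j)))
      = ((w ^ 2) ^ n + 1) ^ g := by
    have step1 : w ^ (2 * m + 1) * (2 * ((x + 1) / 2) *
          ∏ j ∈ Finset.Icc 1 m, (x ^ 2 + 2 * x - 1 + ζ ^ j + (starRingEnd ℂ) (ζ ^ j)))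
        = (w * (w + v)) * (w ^ (2 * m) *
          ∏ j ∈ Finset.Icc 1 m, (x ^ 2 + 2 * x - 1 + ζ ^ j + (starRingEnd ℂ) (ζ ^ j))) := by
      rw [← hx1]; ring
    rw [step1, hP, hre]
    have hw1 : w * (w + v) = w ^ 2 + 1 := by linear_combination hwv
    rw [hw1, ← hsplit, hfull]
  rw [hLHS, hcheb]
  have hwn : w ^ n * v ^ n = 1 := by rw [← mul_pow, hwv, one_pow]
  have hpow : w ^ (2 * m + 1) = (w ^ n) ^ g := by
    rw [← pow_mul, hng]
  rw [hpow, ← mul_pow]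
  congr 1
  linear_combination -hwn
end

section
/- For every integer m ≥ 1, the rational function identity (2m+1)U_{2m}(z)/T_{2m+1}(z) - 1/z = 2z ∑_{j=1}^{m} 1/(z^2 - sin^2(πj/(2m+1))) holds. -/
open Polynomial Real


lemma chebT_deg : ∀ n : ℕ, (Polynomial.Chebyshev.T ℝ n).natDegree ≤ n ∧
    (Polynomial.Chebyshev.T ℝ n).coeff n = 2^(n-1) := by
  intro n
  induction n using Nat.strong_induction_on with
  | _ n ih =>
    match n with
    | 0 => simp [Polynomial.Chebyshev.T_zero]
    | 1 => simp [Polynomial.Chebyshev.T_one]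
    | (k+2) =>
      have h1 := ih (k+1) (by omega)
      have h0 := ih k (by omega)
      have hrec : Polynomial.Chebyshev.T ℝ ((k:ℤ)+2) =
          2 * X * Polynomial.Chebyshev.T ℝ ((k:ℤ)+1) - Polynomial.Chebyshev.T ℝ k :=
        Polynomial.Chebyshev.T_add_two ℝ k
      have hcast : ((k+2 : ℕ) : ℤ) = (k:ℤ) + 2 := by push_cast; ring
      have hcast1 : ((k+1 : ℕ) : ℤ) = (k:ℤ) + 1 := by push_cast; ring
      rw [hcast, hrec]
      rw [hcast1] at h1
      constructor
      · refine le_trans (natDegree_sub_le _ _) ?_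
        simp only [max_le_iff]
        refine ⟨le_trans (natDegree_mul_le) ?_, by omega⟩
        have : (2 * X : ℝ[X]).natDegree ≤ 1 := by compute_degree
        omega
      · have e1 : (2 * X * Polynomial.Chebyshev.T ℝ ((k:ℤ)+1)).coeff (k+2)
            = 2 * (Polynomial.Chebyshev.T ℝ ((k:ℤ)+1)).coeff (k+1) := by
          rw [mul_assoc, (map_ofNat C 2).symm, coeff_C_mul, coeff_X_mul]
        rw [coeff_sub, e1, h1.2, coeff_eq_zero_of_natDegree_lt (lt_of_le_of_lt h0.1 (by omega))]
        simp [pow_succ]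
        ring


-- pure-real root facts
lemma rootT (m k : ℕ) :
    (Polynomial.Chebyshev.T ℝ (2 * (m:ℤ) + 1)).eval
      (Real.cos ((2 * (k:ℝ) + 1) * Real.pi / (2 * (2 * (m:ℝ) + 1)))) = 0 := by
  rw [Polynomial.Chebyshev.T_real_cos, Real.cos_eq_zero_iff]
  refine ⟨k, ?_⟩
  have h : (2 * (m:ℝ) + 1) ≠ 0 := by positivity
  push_cast
  field_simp

lemma rootQ (m k : ℕ) (hk : k < 2 * m + 1) :
    Real.cos ((2 * (k:ℝ) + 1) * Real.pi / (2 * (2 * (m:ℝ) + 1))) *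
      ∏ j ∈ Finset.Icc 1 m,
        (Real.cos ((2 * (k:ℝ) + 1) * Real.pi / (2 * (2 * (m:ℝ) + 1))) ^ 2
          - Real.sin (Real.pi * j / (2 * m + 1)) ^ 2) = 0 := by
  have hne : (2 * (m:ℝ) + 1) ≠ 0 := by positivity
  rcases lt_trichotomy k m with hkm | hkm | hkm
  · have hj1 : m - k ∈ Finset.Icc 1 m := Finset.mem_Icc.mpr (by omega)
    have hrk : Real.cos ((2 * (k:ℝ) + 1) * Real.pi / (2 * (2 * (m:ℝ) + 1)))
        = Real.sin (Real.pi * ((m - k : ℕ):ℝ) / (2 * m + 1)) := by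
      rw [← Real.cos_pi_div_two_sub]
      congr 1
      push_cast [Nat.cast_sub hkm.le]
      field_simp
      ring
    rw [Finset.prod_eq_zero hj1 (by rw [hrk]; ring)]
    ring
  · subst hkm
    have : (2 * (k:ℝ) + 1) * Real.pi / (2 * (2 * (k:ℝ) + 1)) = Real.pi / 2 := by
      field_simp
    rw [this, Real.cos_pi_div_two, zero_mul]
  · have hj1 : k - m ∈ Finset.Icc 1 m := Finset.mem_Icc.mpr (by omega)
    have hrk : Real.cos ((2 * (k:ℝ) + 1) * Real.pi / (2 * (2 * (m:ℝ) + 1)))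
        = - Real.sin (Real.pi * ((k - m : ℕ):ℝ) / (2 * m + 1)) := by
      have hang : (2 * (k:ℝ) + 1) * Real.pi / (2 * (2 * (m:ℝ) + 1)) =
          Real.pi / 2 + Real.pi * ((k - m : ℕ):ℝ) / (2 * m + 1) := by
        push_cast [Nat.cast_sub hkm.le]
        field_simp
        ring
      rw [hang, Real.cos_add]
      simp
    rw [Finset.prod_eq_zero hj1 (by rw [hrk]; ring)]
    ring

lemma injR (m : ℕ) : Set.InjOn (fun k : ℕ =>
    Real.cos ((2 * (k:ℝ) + 1) * Real.pi / (2 * (2 * (m:ℝ) + 1))))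
    (Finset.range (2 * m + 1)) := by
  have hθmem : ∀ k ∈ Finset.range (2 * m + 1),
      (2 * (k:ℝ) + 1) * Real.pi / (2 * (2 * (m:ℝ) + 1)) ∈ Set.Icc 0 Real.pi := by
    intro k hk
    simp only [Finset.mem_range] at hk
    constructor
    · positivity
    · rw [div_le_iff₀ (by positivity)]
      have : (k:ℝ) ≤ 2 * m := by exact_mod_cast Nat.lt_succ_iff.mp hk
      nlinarith [Real.pi_pos]
  intro k1 hk1 k2 hk2 h
  simp only [Finset.mem_coe] at hk1 hk2
  have := Real.injOn_cos (hθmem k1 hk1) (hθmem k2 hk2) h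
  have hpi := Real.pi_ne_zero
  field_simp at this
  have h'' : (k1:ℝ) = k2 := by linarith
  exact_mod_cast h''


lemma derivative_finset_prod {ι : Type*} [DecidableEq ι] (s : Finset ι) (f : ι → ℝ[X]) :
    derivative (∏ i ∈ s, f i) = ∑ i ∈ s, (∏ j ∈ s.erase i, f j) * derivative (f i) := by
  induction s using Finset.induction_on with
  | empty => simp
  | @insert a s ha ih =>
    have hstep : (∑ i ∈ s, (∏ j ∈ (insert a s).erase i, f j) * derivative (f i))
        = ∑ i ∈ s, f a * ((∏ j ∈ s.erase i, f j) * derivative (f i)) := by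
      refine Finset.sum_congr rfl (fun i hi => ?_)
      rw [Finset.erase_insert_of_ne (by rintro rfl; exact ha hi),
        Finset.prod_insert (fun h => ha (Finset.erase_subset _ _ h)), mul_assoc]
    rw [Finset.prod_insert ha, derivative_mul, ih, Finset.sum_insert ha,
      Finset.erase_insert ha, hstep, Finset.mul_sum]
    ring



lemma chebT_factor (m : ℕ) :
    Polynomial.Chebyshev.T ℝ (2 * m + 1) = C ((4:ℝ)^m) *
      (X * ∏ j ∈ Finset.Icc 1 m,
        (X^2 - C (Real.sin (Real.pi * j / (2 * m + 1)) ^ 2))) := by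
  set Q : ℝ[X] := ∏ j ∈ Finset.Icc 1 m,
      (X^2 - C (Real.sin (Real.pi * j / (2 * m + 1)) ^ 2)) with hQ
  have hmono : ∀ j ∈ Finset.Icc 1 m,
      ((X:ℝ[X])^2 - C (Real.sin (Real.pi * j / (2 * m + 1)) ^ 2)).Monic :=
    fun j _ => monic_X_pow_sub_C _ (by norm_num)
  have hQmon : Q.Monic := monic_prod_of_monic _ _ hmono
  have hQdeg : Q.natDegree = 2 * m := by
    rw [hQ, natDegree_prod _ _ (fun j hj => (hmono j hj).ne_zero)]
    rw [Finset.sum_congr rfl (fun j _ => natDegree_X_pow_sub_C (n := 2))]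
    simp [Nat.card_Icc, mul_comm]
  have hXQmon : ((X:ℝ[X]) * Q).Monic := monic_X.mul hQmon
  have hXQdeg : ((X:ℝ[X]) * Q).natDegree = 2 * m + 1 := by
    rw [natDegree_mul X_ne_zero hQmon.ne_zero, natDegree_X, hQdeg]; omega
  set q : ℝ[X] := C ((4:ℝ)^m) * (X * Q) with hq
  have hqdeg : q.natDegree ≤ 2 * m + 1 := le_trans (natDegree_C_mul_le _ _) hXQdeg.le
  have hqcoeff : q.coeff (2 * m + 1) = 4^m := by
    rw [hq, coeff_C_mul, ← hXQdeg, hXQmon.coeff_natDegree, mul_one]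
  have hT := chebT_deg (2 * m + 1)
  have hcastT : ((2 * m + 1 : ℕ) : ℤ) = 2 * (m:ℤ) + 1 := by push_cast; ring
  rw [hcastT] at hT
  have hTdeg : (Polynomial.Chebyshev.T ℝ (2 * (m:ℤ) + 1)).natDegree ≤ 2 * m + 1 := hT.1
  have hTcoeff : (Polynomial.Chebyshev.T ℝ (2 * (m:ℤ) + 1)).coeff (2 * m + 1) = 4^m := by
    rw [hT.2, show 2*m+1-1 = 2*m from rfl, pow_mul]; norm_num
  have heval : ∀ x ∈ (Finset.range (2 * m + 1)).image (fun k : ℕ =>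
      Real.cos ((2 * (k:ℝ) + 1) * Real.pi / (2 * (2 * (m:ℝ) + 1)))),
      (Polynomial.Chebyshev.T ℝ (2 * (m:ℤ) + 1) - q).eval x = 0 := by
    intro x hx
    simp only [Finset.mem_image, Finset.mem_range] at hx
    obtain ⟨k, hk, rfl⟩ := hx
    have hqeval : q.eval (Real.cos ((2 * (k:ℝ) + 1) * Real.pi / (2 * (2 * (m:ℝ) + 1)))) = 0 := by
      have h0 := rootQ m k hk
      rw [hq, eval_mul, eval_mul, hQ, eval_prod]
      simp only [eval_sub, eval_pow, eval_X, eval_C]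
      rw [h0, mul_zero]
    rw [eval_sub, rootT m k, hqeval, sub_self]
  have hcard : ((Finset.range (2 * m + 1)).image (fun k : ℕ =>
      Real.cos ((2 * (k:ℝ) + 1) * Real.pi / (2 * (2 * (m:ℝ) + 1))))).card = 2 * m + 1 := by
    rw [Finset.card_image_of_injOn (injR m), Finset.card_range]
  have key : Polynomial.Chebyshev.T ℝ (2 * (m:ℤ) + 1) - q = 0 := by
    rcases eq_or_ne (Polynomial.Chebyshev.T ℝ (2 * (m:ℤ) + 1) - q) 0 with h | h
    · exact h
    · apply Polynomial.eq_zero_of_natDegree_lt_card_of_eval_eq_zero' _ _ heval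
      rw [hcard]
      have hle : (Polynomial.Chebyshev.T ℝ (2 * (m:ℤ) + 1) - q).natDegree ≤ 2 * m + 1 :=
        le_trans (natDegree_sub_le _ _) (max_le hTdeg hqdeg)
      rcases lt_or_eq_of_le hle with h' | h'
      · exact h'
      · exfalso
        have hlc := Polynomial.leadingCoeff_ne_zero.mpr h
        rw [Polynomial.leadingCoeff, h'] at hlc
        exact hlc (by rw [coeff_sub, hTcoeff, hqcoeff, sub_self])
  rw [sub_eq_zero.mp key, hq]




theorem chebyshev_log_derivative_identity (m : ℕ) (hm : 1 ≤ m) (z : ℝ)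
    (hz : z ≠ 0)
    (hT : (Polynomial.Chebyshev.T ℝ (2 * m + 1)).eval z ≠ 0)
    (hden : ∀ j ∈ Finset.Icc 1 m,
      z ^ 2 - Real.sin (Real.pi * j / (2 * m + 1)) ^ 2 ≠ 0) :
    (2 * m + 1 : ℝ) * (Polynomial.Chebyshev.U ℝ (2 * m)).eval z /
        (Polynomial.Chebyshev.T ℝ (2 * m + 1)).eval z - 1 / z =
      2 * z * ∑ j ∈ Finset.Icc 1 m,
        1 / (z ^ 2 - Real.sin (Real.pi * j / (2 * m + 1)) ^ 2) := by
  classical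
  set P : ℕ → ℝ := fun j => z ^ 2 - Real.sin (Real.pi * j / (2 * m + 1)) ^ 2 with hP
  set W : ℝ := ∏ j ∈ Finset.Icc 1 m, P j with hW
  set D : ℝ := ∑ j ∈ Finset.Icc 1 m, (∏ i ∈ (Finset.Icc 1 m).erase j, P i) * (2 * z) with hD
  have hWne : W ≠ 0 := Finset.prod_ne_zero_iff.mpr hden
  have hc : ((4:ℝ)^m) ≠ 0 := by positivity
  have hfac := chebT_factor m
  have hTz : (Polynomial.Chebyshev.T ℝ (2 * m + 1)).eval z = (4:ℝ)^m * (z * W) := by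
    rw [hfac]; simp [eval_prod, hW, hP]
  have hder : derivative (Polynomial.Chebyshev.T ℝ (2 * m + 1)) =
      ((2 * (m:ℤ) + 1 : ℤ) : ℝ[X]) * Polynomial.Chebyshev.U ℝ (2 * m) := by
    have h := Polynomial.Chebyshev.T_derivative_eq_U (R := ℝ) (2 * (m:ℤ) + 1)
    rw [show (2 * (m:ℤ) + 1) - 1 = 2 * m by ring] at h
    exact_mod_cast h
  have hUz : (2 * (m:ℝ) + 1) * (Polynomial.Chebyshev.U ℝ (2 * m)).eval z
      = (4:ℝ)^m * (W + z * D) := by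
    have h1 : (derivative (Polynomial.Chebyshev.T ℝ (2 * m + 1))).eval z
        = (2 * (m:ℝ) + 1) * (Polynomial.Chebyshev.U ℝ (2 * m)).eval z := by
      rw [hder, eval_mul, eval_intCast]
      push_cast
      ring
    have hdQ : (derivative (∏ j ∈ Finset.Icc 1 m,
        ((X:ℝ[X])^2 - C (Real.sin (Real.pi * j / (2 * m + 1)) ^ 2)))).eval z = D := by
      rw [derivative_finset_prod, eval_finset_sum, hD]
      refine Finset.sum_congr rfl fun j hj => ?_
      simp only [eval_mul, eval_prod, eval_sub, eval_pow, eval_X, eval_C,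
        derivative_sub, derivative_X_pow, derivative_C, sub_zero, eval_natCast, hP]
      push_cast
      ring
    rw [← h1, hfac, derivative_C_mul, derivative_mul, derivative_X, eval_mul, eval_C, eval_add]
    simp only [eval_mul, eval_one, eval_X, one_mul]
    rw [hdQ, eval_prod]
    have hWW : (∏ j ∈ Finset.Icc 1 m,
        eval z ((X:ℝ[X])^2 - C (Real.sin (Real.pi * j / (2 * m + 1)) ^ 2))) = W := by
      rw [hW]
      refine Finset.prod_congr rfl fun j hj => ?_
      simp [hP]
    rw [hWW]
  -- final algebra
  have hstep1 : (2 * (m:ℝ) + 1) * (Polynomial.Chebyshev.U ℝ (2 * m)).eval z /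
      (Polynomial.Chebyshev.T ℝ (2 * m + 1)).eval z - 1 / z = D / W := by
    rw [hUz, hTz]
    field_simp
    ring
  rw [hstep1, hD, Finset.sum_div, Finset.mul_sum]
  refine Finset.sum_congr rfl (fun j hj => ?_)
  rw [hW, ← Finset.mul_prod_erase _ _ hj]
  have hPj : P j ≠ 0 := hden j hj
  have hE : (∏ i ∈ (Finset.Icc 1 m).erase j, P i) ≠ 0 :=
    Finset.prod_ne_zero_iff.mpr fun i hi => hden i (Finset.mem_of_mem_erase hi)
  have : z ^ 2 - Real.sin (Real.pi * j / (2 * m + 1)) ^ 2 = P j := rfl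
  rw [this]
  field_simp
end
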